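/- Let N ≥ 1 and K̄ ≥ 1 be natural numbers, K = N·K̄, and let a : Fin K → ℝ be monotone (a_i ≤ a_j whenever i ≤ j). Define the sequential (consecutive) partition by D_j = {k : (j−1)·K̄ ≤ k < j·K̄} for j = 1, …, N. Then for every partition C_1, …, C_N of Fin K into N pairwise disjoint sets each of cardinality K̄, one has ∑_{j=1}^{N} max_{k ∈ D_j} a_k ≤ ∑_{n=1}^{N} max_{k ∈ C_n} a_k; in particular the sequential partition minimizes the sum of per-cluster maxima, and its value equals ∑_{j=1}^{N} a_{j·K̄ − 1} (0-based indices). -/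

import Mathlib

open scoped Classical

/-- Theorem 1: the sequential (consecutive) partition minimizes the sum of per-cluster
maxima among all partitions into N clusters of size Kb, and its value is
∑_j a_{j·Kb - 1} (0-based indices). -/
theorem stmt_4 (N Kb : ℕ) (hN : 1 ≤ N) (hKb : 1 ≤ Kb)
    (a : Fin (N * Kb) → ℝ) (ha : Monotone a)
    (D : Fin N → Finset (Fin (N * Kb)))
    (hD : ∀ j : Fin N, D j =
      Finset.univ.filter (fun k : Fin (N * Kb) =>
        j.val * Kb ≤ k.val ∧ k.val < (j.val + 1) * Kb))
    (hDne : ∀ j : Fin N, (D j).Nonempty)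
    (C : Fin N → Finset (Fin (N * Kb)))
    (hdisj : ∀ i j : Fin N, i ≠ j → Disjoint (C i) (C j))
    (hcard : ∀ n : Fin N, (C n).card = Kb)
    (hcover : ∀ k : Fin (N * Kb), ∃ n : Fin N, k ∈ C n) :
    (∑ j : Fin N, (D j).sup' (hDne j) a ≤
        ∑ n : Fin N, (C n).sup' (Finset.card_pos.mp (by rw [hcard n]; omega)) a) ∧
      ∑ j : Fin N, (D j).sup' (hDne j) a =
        ∑ j : Fin N, a ⟨j.val * Kb + (Kb - 1), by
          have h1 : j.val + 1 ≤ N := j.isLt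
          have h2 : (j.val + 1) * Kb ≤ N * Kb := Nat.mul_le_mul_right _ h1
          have h3 : (j.val + 1) * Kb = j.val * Kb + Kb := by ring
          omega⟩ := by
  -- the sequential cluster maxima
  have hmlt : ∀ j : Fin N, j.val * Kb + (Kb - 1) < N * Kb := by
    intro j
    have h1 : j.val + 1 ≤ N := j.isLt
    have h2 : (j.val + 1) * Kb ≤ N * Kb := Nat.mul_le_mul_right _ h1
    have h3 : (j.val + 1) * Kb = j.val * Kb + Kb := by ring
    omega
  set m : Fin N → Fin (N * Kb) := fun j => ⟨j.val * Kb + (Kb - 1), hmlt j⟩ with hmdef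
  -- value of the sequential partition
  have hDsup : ∀ j : Fin N, (D j).sup' (hDne j) a = a (m j) := by
    intro j
    apply le_antisymm
    · apply Finset.sup'_le
      intro k hk
      rw [hD j, Finset.mem_filter] at hk
      apply ha
      have h3 : (j.val + 1) * Kb = j.val * Kb + Kb := by ring
      have : k.val ≤ j.val * Kb + (Kb - 1) := by omega
      exact this
    · apply Finset.le_sup'
      rw [hD j, Finset.mem_filter]
      have h3 : (j.val + 1) * Kb = j.val * Kb + Kb := by ring
      refine ⟨Finset.mem_univ _, ?_, ?_⟩
      · show j.val * Kb ≤ j.val * Kb + (Kb - 1); omega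
      · show j.val * Kb + (Kb - 1) < (j.val + 1) * Kb; omega
  -- clusters are nonempty; their max elements
  have hne : ∀ n : Fin N, (C n).Nonempty := fun n =>
    Finset.card_pos.mp (by rw [hcard n]; omega)
  set t : Fin N → Fin (N * Kb) := fun n => (C n).max' (hne n) with htdef
  have hCsup : ∀ n : Fin N, (C n).sup' (hne n) a = a (t n) := by
    intro n
    apply le_antisymm
    · exact Finset.sup'_le _ _ fun k hk => ha (Finset.le_max' _ _ hk)
    · exact Finset.le_sup' a ((C n).max'_mem (hne n))
  have htinj : Function.Injective t := by
    intro i j h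
    by_contra hij
    have hdis := hdisj i j hij
    have hi := (C i).max'_mem (hne i)
    have hj := (C j).max'_mem (hne j)
    rw [show (C i).max' (hne i) = t i from rfl, h] at hi
    exact Finset.disjoint_left.mp hdis hi hj
  set T : Finset (Fin (N * Kb)) := Finset.univ.image t with hTdef
  have hTcard : T.card = N := by
    rw [hTdef, Finset.card_image_of_injective _ htinj, Finset.card_univ, Fintype.card_fin]
  set e := T.orderIsoOfFin hTcard with hedef
  -- key : the j-th smallest cluster maximum is at least m j
  have hkey : ∀ j : Fin N, m j ≤ (e j : Fin (N * Kb)) := by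
    intro j
    by_contra hcon
    push_neg at hcon
    have hcon' : ((e j : Fin (N * Kb)) : ℕ) < j.val * Kb + (Kb - 1) := hcon
    set mv := j.val * Kb + (Kb - 1) with hmv
    -- clusters whose maximum is below mv
    set S : Finset (Fin N) := Finset.univ.filter (fun n => (t n).val < mv) with hSdef
    -- S has at least j+1 elements
    have hS : j.val + 1 ≤ S.card := by
      have himg : S = Finset.univ.filter (fun n => ((t n : Fin (N * Kb)).val < mv)) := rfl
      have h1 : (T.filter (fun x => x.val < mv)).card = S.card := by
        rw [hTdef, Finset.filter_image, Finset.card_image_of_injective _ htinj]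
      have hUsub : (Finset.Iic j).image (fun i => (e i : Fin (N * Kb))) ⊆
          T.filter (fun x => x.val < mv) := by
        intro x hx
        rw [Finset.mem_image] at hx
        obtain ⟨i, hi, rfl⟩ := hx
        rw [Finset.mem_Iic] at hi
        refine Finset.mem_filter.mpr ⟨(e i).2, ?_⟩
        have : e i ≤ e j := e.monotone hi
        have hle : (e i : Fin (N * Kb)) ≤ (e j : Fin (N * Kb)) := this
        exact lt_of_le_of_lt hle hcon'
      have hUcard : ((Finset.Iic j).image (fun i => (e i : Fin (N * Kb)))).card = j.val + 1 := by
        rw [Finset.card_image_of_injective, Fin.card_Iic]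
        intro x y hxy
        exact e.injective (Subtype.ext hxy)
      calc j.val + 1 = _ := hUcard.symm
        _ ≤ (T.filter (fun x => x.val < mv)).card := Finset.card_le_card hUsub
        _ = S.card := h1
    -- all elements of clusters in S lie below mv
    set B : Finset (Fin (N * Kb)) := Finset.univ.filter (fun k => k.val < mv) with hBdef
    have hsub : S.biUnion C ⊆ B := by
      intro k hk
      rw [Finset.mem_biUnion] at hk
      obtain ⟨n, hn, hkC⟩ := hk
      rw [hSdef, Finset.mem_filter] at hn
      have : k ≤ t n := Finset.le_max' _ _ hkC
      exact Finset.mem_filter.mpr ⟨Finset.mem_univ _, lt_of_le_of_lt this hn.2⟩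
    have hBcard : B.card ≤ mv := by
      have h := Finset.card_le_card_of_injOn (s := B) (t := Finset.range mv)
        (fun k : Fin (N * Kb) => (k.val : ℕ))
        (fun k hk => Finset.mem_range.mpr ((Finset.mem_filter.mp hk).2))
        (fun x _ y _ h => Fin.ext h)
      simpa [Finset.card_range] using h
    have hbi : (S.biUnion C).card = S.card * Kb := by
      rw [Finset.card_biUnion (fun i _ j _ hij => hdisj i j hij)]
      rw [Finset.sum_congr rfl (fun n _ => hcard n), Finset.sum_const, smul_eq_mul]
    have h2 : (j.val + 1) * Kb ≤ S.card * Kb := Nat.mul_le_mul_right _ hS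
    have h3 : (j.val + 1) * Kb = j.val * Kb + Kb := by ring
    have h4 : S.card * Kb ≤ B.card := by rw [← hbi]; exact Finset.card_le_card hsub
    omega
  -- sum over clusters equals sum over sorted maxima
  have hsum : ∑ n : Fin N, a (t n) = ∑ j : Fin N, a (e j : Fin (N * Kb)) := by
    have h1 : ∑ x ∈ T, a x = ∑ n : Fin N, a (t n) :=
      Finset.sum_image (fun x _ y _ h => htinj h)
    rw [← h1, ← Finset.sum_coe_sort T a]
    exact (Fintype.sum_equiv e.toEquiv _ _ (fun j => rfl)).symm
  constructor
  · calc ∑ j : Fin N, (D j).sup' (hDne j) a = ∑ j : Fin N, a (m j) := by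
          simp only [hDsup]
      _ ≤ ∑ j : Fin N, a (e j : Fin (N * Kb)) :=
          Finset.sum_le_sum (fun j _ => ha (hkey j))
      _ = ∑ n : Fin N, a (t n) := hsum.symm
      _ = ∑ n : Fin N, (C n).sup' _ a := by
          refine Finset.sum_congr rfl (fun n _ => ?_)
          exact (hCsup n).symm
  · simp only [hDsup]; rfl
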